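/- For nonnegative integers ν, w, u with w ≥ 1, the Stirling numbers of the second kind satisfy ∑_{m=u}^{ν+1−w} C(ν,m) S(ν−m+1, w) S(m, u) = C(w+u−1, w−1) S(ν+1, w+u). -/

import Mathlib

open Finset

/-- Stirling numbers of the second kind. -/
def stirling : ℕ → ℕ → ℕ
  | 0, 0 => 1
  | 0, _ + 1 => 0
  | _ + 1, 0 => 0
  | n + 1, k + 1 => (k + 1) * stirling n (k + 1) + stirling n k

lemma stirling_succ_succ (n k : ℕ) :
    stirling (n + 1) (k + 1) = (k + 1) * stirling n (k + 1) + stirling n k := rfl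

lemma stirling_eq_zero_of_lt : ∀ {n k : ℕ}, n < k → stirling n k = 0
  | 0, k + 1, _ => rfl
  | n + 1, k + 1, h => by
    rw [stirling_succ_succ, stirling_eq_zero_of_lt (show n < k + 1 by omega),
      stirling_eq_zero_of_lt (show n < k by omega)]
    ring

lemma stirling_zero_of_ne {n : ℕ} (h : n ≠ 0) : stirling n 0 = 0 := by
  cases n with
  | zero => omega
  | succ n => rfl

/-- The full-range Vandermonde identity for Stirling numbers. -/
lemma stirling_vandermonde (ν : ℕ) : ∀ w u : ℕ,
    ∑ m ∈ Finset.range (ν + 1), ν.choose m * stirling (ν - m) w * stirling m u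
      = (w + u).choose w * stirling ν (w + u) := by
  induction ν with
  | zero =>
    intro w u
    rw [Finset.sum_range_one]
    cases w with
    | zero => cases u with
      | zero => rfl
      | succ u =>
        rw [stirling_eq_zero_of_lt (show 0 < u + 1 by omega),
          stirling_eq_zero_of_lt (show 0 < 0 + (u + 1) by omega)]
        ring
    | succ w =>
      rw [stirling_eq_zero_of_lt (show (0:ℕ) - 0 < w + 1 by omega),
        stirling_eq_zero_of_lt (show 0 < w + 1 + u by omega)]
      ring
  | succ ν ih =>
    intro w u
    cases u with
    | zero =>
      rw [Finset.sum_eq_single_of_mem 0 (by simp)]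
      · simp [stirling, Nat.choose_zero_right]
      · intro m _ hm
        obtain ⟨m', rfl⟩ : ∃ m', m = m' + 1 := ⟨m - 1, by omega⟩
        rw [stirling_zero_of_ne (show m' + 1 ≠ 0 by omega)]
        ring
    | succ u =>
      cases w with
      | zero =>
        rw [Finset.sum_eq_single_of_mem (ν + 1) (by simp)]
        · simp [stirling]
        · intro m hm hne
          have hm' : m < ν + 1 + 1 := Finset.mem_range.mp hm
          rw [stirling_zero_of_ne (show ν + 1 - m ≠ 0 by omega)]
          ring
      | succ w =>
        -- abbreviations
        set S := stirling with hS
        -- Step 1: split via Pascal's rule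
        have step1 : ∑ m ∈ Finset.range (ν + 1 + 1),
              (ν + 1).choose m * S (ν + 1 - m) (w + 1) * S m (u + 1)
            = (∑ m ∈ Finset.range (ν + 1),
                ν.choose m * S (ν - m) (w + 1) * S (m + 1) (u + 1))
              + ∑ m ∈ Finset.range (ν + 2),
                ν.choose m * S (ν + 1 - m) (w + 1) * S m (u + 1) := by
          rw [Finset.sum_range_succ'
              (fun m => (ν + 1).choose m * S (ν + 1 - m) (w + 1) * S m (u + 1)) (ν + 1),
            Finset.sum_range_succ'
              (fun m => ν.choose m * S (ν + 1 - m) (w + 1) * S m (u + 1)) (ν + 1)]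
          simp only [Nat.succ_sub_succ, Nat.choose_succ_succ, Nat.sub_zero,
            Nat.choose_zero_right, Nat.succ_eq_add_one]
          have hX : ∑ x ∈ Finset.range (ν + 1),
              (ν.choose x + ν.choose (x + 1)) * S (ν - x) (w + 1) * S (x + 1) (u + 1)
              = (∑ x ∈ Finset.range (ν + 1),
                  ν.choose x * S (ν - x) (w + 1) * S (x + 1) (u + 1))
                + ∑ x ∈ Finset.range (ν + 1),
                  ν.choose (x + 1) * S (ν - x) (w + 1) * S (x + 1) (u + 1) := by
            rw [← Finset.sum_add_distrib]
            exact Finset.sum_congr rfl fun x _ => by ring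
          rw [hX]
          ring
        rw [step1]
        -- Step 2: the first sum
        have step2 : (∑ m ∈ Finset.range (ν + 1),
              ν.choose m * S (ν - m) (w + 1) * S (m + 1) (u + 1))
            = (u + 1) * ((w + 1 + (u + 1)).choose (w + 1) * S ν (w + 1 + (u + 1)))
              + (w + 1 + u).choose (w + 1) * S ν (w + 1 + u) := by
          have : ∀ m ∈ Finset.range (ν + 1),
              ν.choose m * S (ν - m) (w + 1) * S (m + 1) (u + 1)
              = (u + 1) * (ν.choose m * S (ν - m) (w + 1) * S m (u + 1))
                + ν.choose m * S (ν - m) (w + 1) * S m u := by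
            intro m _
            rw [hS, stirling_succ_succ m u]
            ring
          rw [Finset.sum_congr rfl this, Finset.sum_add_distrib, ← Finset.mul_sum,
            ih (w + 1) (u + 1), ih (w + 1) u]
        -- Step 3: the second sum
        have step3 : (∑ m ∈ Finset.range (ν + 2),
              ν.choose m * S (ν + 1 - m) (w + 1) * S m (u + 1))
            = (w + 1) * ((w + 1 + (u + 1)).choose (w + 1) * S ν (w + 1 + (u + 1)))
              + (w + (u + 1)).choose w * S ν (w + (u + 1)) := by
          rw [Finset.sum_range_succ, Nat.choose_succ_self]
          have : ∀ m ∈ Finset.range (ν + 1),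
              ν.choose m * S (ν + 1 - m) (w + 1) * S m (u + 1)
              = (w + 1) * (ν.choose m * S (ν - m) (w + 1) * S m (u + 1))
                + ν.choose m * S (ν - m) w * S m (u + 1) := by
            intro m hm
            have hm' : m < ν + 1 := Finset.mem_range.mp hm
            rw [show ν + 1 - m = (ν - m) + 1 by omega, hS, stirling_succ_succ (ν - m) w]
            ring
          rw [Finset.sum_congr rfl this, Finset.sum_add_distrib, ← Finset.mul_sum,
            ih (w + 1) (u + 1), ih w (u + 1)]
          ring
        rw [step2, step3]
        -- Step 4: final algebra
        simp only [show w + 1 + (u + 1) = w + u + 2 from by omega,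
          show w + 1 + u = w + u + 1 from by omega,
          show w + (u + 1) = w + u + 1 from by omega]
        have hstep : S (ν + 1) (w + u + 2)
            = (w + u + 2) * S ν (w + u + 2) + S ν (w + u + 1) := by
          rw [hS]; exact stirling_succ_succ ν (w + u + 1)
        have hpascal : (w + u + 2).choose (w + 1)
            = (w + u + 1).choose w + (w + u + 1).choose (w + 1) :=
          Nat.choose_succ_succ' (w + u + 1) w
        rw [hstep, hpascal]
        ring

theorem stirling_vandermonde_shifted (ν w u : ℕ) (hw : 1 ≤ w) :
    ∑ m ∈ Finset.Icc u (ν + 1 - w),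
        ν.choose m * stirling (ν - m + 1) w * stirling m u
      = (w + u - 1).choose (w - 1) * stirling (ν + 1) (w + u) := by
  obtain ⟨w, rfl⟩ : ∃ w', w = w' + 1 := ⟨w - 1, by omega⟩
  have hext : ∑ m ∈ Finset.Icc u (ν + 1 - (w + 1)),
      ν.choose m * stirling (ν - m + 1) (w + 1) * stirling m u
      = ∑ m ∈ Finset.range (ν + 1),
        ν.choose m * stirling (ν - m + 1) (w + 1) * stirling m u := by
    apply Finset.sum_subset
    · intro m hm
      simp only [Finset.mem_Icc] at hm
      simp only [Finset.mem_range]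
      omega
    · intro m hm hnm
      simp only [Finset.mem_range] at hm
      simp only [Finset.mem_Icc, not_and_or, not_le] at hnm
      rcases hnm with h | h
      · rw [stirling_eq_zero_of_lt h]; ring
      · rw [stirling_eq_zero_of_lt (show ν - m + 1 < w + 1 by omega)]; ring
  rw [hext]
  have expand : ∀ m ∈ Finset.range (ν + 1),
      ν.choose m * stirling (ν - m + 1) (w + 1) * stirling m u
      = (w + 1) * (ν.choose m * stirling (ν - m) (w + 1) * stirling m u)
        + ν.choose m * stirling (ν - m) w * stirling m u := by
    intro m _
    rw [stirling_succ_succ (ν - m) w]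
    ring
  rw [Finset.sum_congr rfl expand, Finset.sum_add_distrib, ← Finset.mul_sum,
    stirling_vandermonde ν (w + 1) u, stirling_vandermonde ν w u]
  simp only [show w + 1 + u = w + u + 1 from by omega, Nat.add_sub_cancel]
  have hstep : stirling (ν + 1) (w + u + 1)
      = (w + u + 1) * stirling ν (w + u + 1) + stirling ν (w + u) :=
    stirling_succ_succ ν (w + u)
  have hchoose : (w + u + 1) * (w + u).choose w = (w + u + 1).choose (w + 1) * (w + 1) :=
    Nat.add_one_mul_choose_eq (w + u) w
  have hkey : (w + 1) * ((w + u + 1).choose (w + 1) * stirling ν (w + u + 1))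
      = (w + u + 1) * ((w + u).choose w * stirling ν (w + u + 1)) := by
    rw [← mul_assoc, mul_comm (w + 1) ((w + u + 1).choose (w + 1)), ← hchoose, mul_assoc]
  rw [hstep, hkey]
  ring
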